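/- Let f₂(z) = -3(3z-4)/(2z(2z-3)²). There exists a unique ξ ∈ (-∞,0) with f₂(ξ) = ξ, and this fixed point is repelling, i.e. |f₂'(ξ)| > 1. -/

import Mathlib

open Set

private lemma g_deriv (x : ℝ) :
    HasDerivAt (fun x : ℝ => 8*x^4 - 24*x^3 + 18*x^2 + 9*x - 12)
      (32*x^3 - 72*x^2 + 36*x + 9) x := by
  have h := (((((hasDerivAt_pow 4 x).const_mul (8:ℝ)).sub
      ((hasDerivAt_pow 3 x).const_mul (24:ℝ))).add
      ((hasDerivAt_pow 2 x).const_mul (18:ℝ))).add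
      ((hasDerivAt_id' (𝕜 := ℝ) (x := x)).const_mul (9:ℝ))).sub_const 12
  exact h.congr_deriv (by push_cast; ring)

private lemma fix_iff_g {x : ℝ} (hx : x < 0) {f : ℝ → ℝ}
    (hf : ∀ x : ℝ, f x = -3 * (3 * x - 4) / (2 * x * (2 * x - 3) ^ 2)) :
    f x = x ↔ 8*x^4 - 24*x^3 + 18*x^2 + 9*x - 12 = 0 := by
  have h1 : (2*x - 3) < 0 := by linarith
  have h2 : (2*x-3)^2 > 0 := by nlinarith
  have hD : 2 * x * (2 * x - 3) ^ 2 ≠ 0 := by nlinarith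
  rw [hf, div_eq_iff hD]
  constructor <;> intro h <;> nlinarith [h]

theorem stmt_2 (f : ℝ → ℝ)
    (hf : ∀ x : ℝ, f x = -3 * (3 * x - 4) / (2 * x * (2 * x - 3) ^ 2)) :
    ∃ ξ : ℝ, ξ < 0 ∧ f ξ = ξ ∧ |deriv f ξ| > 1 ∧
      ∀ ξ' : ℝ, ξ' < 0 → f ξ' = ξ' → ξ' = ξ := by
  set g : ℝ → ℝ := fun x => 8*x^4 - 24*x^3 + 18*x^2 + 9*x - 12 with hgdef
  have hgc : Continuous g := by fun_prop
  have hanti : StrictAntiOn g (Iic (-(1:ℝ)/4)) := by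
    apply strictAntiOn_of_deriv_neg (convex_Iic _) hgc.continuousOn
    intro x hx
    rw [interior_Iic] at hx
    rw [(g_deriv x).deriv]
    have hx' : x < -(1:ℝ)/4 := hx
    nlinarith [sq_nonneg x, sq_nonneg (x + 1/4), sq_nonneg (x^2 - x)]
  have h1 : g (-1) = 29 := by norm_num [hgdef]
  have h2 : g (-(1:ℝ)/4) < 0 := by norm_num [hgdef]
  have hivt := intermediate_value_Icc' (by norm_num : (-1:ℝ) ≤ -(1:ℝ)/4) hgc.continuousOn
  have h0mem : (0:ℝ) ∈ Icc (g (-(1:ℝ)/4)) (g (-1)) := ⟨le_of_lt h2, by rw [h1]; norm_num⟩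
  obtain ⟨ξ, hξmem, hgξ⟩ := hivt h0mem
  have hξ0 : ξ < 0 := lt_of_le_of_lt hξmem.2 (by norm_num)
  have hξm1 : -1 ≤ ξ := hξmem.1
  have hξIic : ξ ∈ Iic (-(1:ℝ)/4) := hξmem.2
  have hg23 : g (-(2:ℝ)/3) < 0 := by norm_num [hgdef]
  have hξ23 : ξ < -(2:ℝ)/3 := by
    by_contra hcon
    push_neg at hcon
    rcases eq_or_lt_of_le hcon with h | h
    · rw [h, hgξ] at hg23; linarith
    · have := hanti (by norm_num : (-(2:ℝ)/3) ∈ Iic (-(1:ℝ)/4)) hξIic h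
      rw [hgξ] at this; linarith
  -- derivative of f at ξ
  have hDneg : 2 * ξ * (2 * ξ - 3) ^ 2 < 0 := by nlinarith [sq_nonneg (2*ξ-3), sq_abs (2*ξ-3)]
  have hDne : 2 * ξ * (2 * ξ - 3) ^ 2 ≠ 0 := ne_of_lt hDneg
  have hNd : HasDerivAt (fun x : ℝ => -3*(3*x-4)) (-9) ξ := by
    have h := (((hasDerivAt_id' (𝕜 := ℝ) (x := ξ)).const_mul (3:ℝ)).sub_const 4).const_mul (-3:ℝ)
    exact h.congr_deriv (by norm_num)
  have h2x : HasDerivAt (fun x : ℝ => 2*x) 2 ξ := by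
    simpa using (hasDerivAt_id' (𝕜 := ℝ) (x := ξ)).const_mul (2:ℝ)
  have h4 : HasDerivAt (fun x : ℝ => (2*x-3)^2) (4*(2*ξ-3)) ξ := by
    have h := (h2x.sub_const 3).pow 2
    exact h.congr_deriv (by push_cast; ring)
  have hDd : HasDerivAt (fun x : ℝ => 2*x*(2*x-3)^2)
      (2*(2*ξ-3)^2 + 2*ξ*(4*(2*ξ-3))) ξ := h2x.mul h4
  have hFd := hNd.div hDd hDne
  have hfe : f = fun x => -3*(3*x-4)/(2*x*(2*x-3)^2) := funext hf
  have hderiv : deriv f ξ =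
      ((-9) * (2*ξ*(2*ξ-3)^2) - (-3*(3*ξ-4)) * (2*(2*ξ-3)^2 + 2*ξ*(4*(2*ξ-3)))) /
        (2*ξ*(2*ξ-3)^2)^2 := by
    rw [hfe]; exact hFd.deriv
  have hgξ' : 8*ξ^4 - 24*ξ^3 + 18*ξ^2 + 9*ξ - 12 = 0 := hgξ
  have hHpos : -16*ξ^3 + 24*ξ^2 - 9 > 0 := by nlinarith [sq_nonneg ξ, sq_nonneg (ξ + 2/3)]
  have hvlt : deriv f ξ < -1 := by
    rw [hderiv, div_lt_iff₀ (by positivity)]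
    have hX : (2*ξ*(2*ξ-3)^2) * (-16*ξ^3+24*ξ^2-9) < 0 :=
      mul_neg_of_neg_of_pos hDneg hHpos
    have hzero : (8*ξ^4-24*ξ^3+18*ξ^2+9*ξ-12) * (2*(2*ξ-3)^2+2*ξ*(4*(2*ξ-3))) = 0 := by
      rw [hgξ']; ring
    nlinarith [hX, hzero]
  refine ⟨ξ, hξ0, (fix_iff_g hξ0 hf).mpr hgξ', ?_, ?_⟩
  · exact lt_of_lt_of_le (show (1:ℝ) < -(deriv f ξ) by linarith) (neg_le_abs _)
  · intro ξ' hξ'0 hfix'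
    have hg' : 8*ξ'^4 - 24*ξ'^3 + 18*ξ'^2 + 9*ξ' - 12 = 0 := (fix_iff_g hξ'0 hf).mp hfix'
    have hξ'le : ξ' ≤ -(1:ℝ)/4 := by
      by_contra hcon
      push_neg at hcon
      have ha : ξ'^2 ≤ 1/16 := by nlinarith
      have hb : (2*ξ'-3)^2 ≤ 49/4 := by nlinarith
      have hc : ξ'^2 * (2*ξ'-3)^2 ≤ 49/64 :=
        le_trans (mul_le_mul ha hb (sq_nonneg _) (by norm_num)) (by norm_num)
      nlinarith [hc]
    exact hanti.injOn hξ'le hξIic (by rw [hgξ]; exact hg')
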